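/- Let V be a complex vector space of dimension 2m (m ≥ 1) equipped with a nondegenerate alternating bilinear form ⟨ , ⟩. Let λ¹,…,λˢ be symmetric partitions contained in the m×m square and let F•¹,…,F•ˢ be isotropic full flags in V. Then the Lagrangian involution permutes the solutions of the corresponding Schubert problem: the intersection X_{λ¹}F•¹ ∩ X_{λ²}F•² ∩ ⋯ ∩ X_{λˢ}F•ˢ is mapped onto itself by H ↦ ∠(H), which is an involutive bijection of this set. -/

import Mathlib

open Module

/-- The annihilator `∠(W) = {v ∈ V | ⟨v,w⟩ = 0 for all w ∈ W}` of a subspace `W`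
with respect to a bilinear form `B`. -/
def ann {V : Type*} [AddCommGroup V] [Module ℂ V]
    (B : LinearMap.BilinForm ℂ V) (W : Submodule ℂ V) : Submodule ℂ V :=
  W.dualAnnihilator.comap B

/-- A full flag `F₀ = 0 ⊊ F₁ ⊊ ⋯ ⊊ F_{2m} = V` with `dim Fᵢ = i`. -/
def IsFullFlag (m : ℕ) {V : Type*} [AddCommGroup V] [Module ℂ V]
    (F : Fin (2 * m + 1) → Submodule ℂ V) : Prop :=
  F 0 = ⊥ ∧ F (Fin.last (2 * m)) = ⊤ ∧ StrictMono F ∧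
    ∀ i, finrank ℂ (F i) = (i : ℕ)

/-- The annihilator flag `∠(F•)`, whose `i`-th member is `∠(F_{2m-i})`. -/
def annFlag (m : ℕ) {V : Type*} [AddCommGroup V] [Module ℂ V]
    (B : LinearMap.BilinForm ℂ V) (F : Fin (2 * m + 1) → Submodule ℂ V) :
    Fin (2 * m + 1) → Submodule ℂ V :=
  fun i => ann B (F i.rev)

/-- The conjugate partition `λ'ⱼ = #{i | λᵢ ≥ j}` of a partition contained in the
`m × m` square, where `lam i` is the `(i+1)`-st part `λ_{i+1}`. -/
def conjugatePartition (m : ℕ) (lam : Fin m → ℕ) : Fin m → ℕ :=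
  fun j => (Finset.univ.filter fun i : Fin m => (j : ℕ) + 1 ≤ lam i).card

/-- The Schubert variety
`X_λ F• = {H | dim H = m and dim (H ∩ F_{m+i-λᵢ}) ≥ i for i = 1,…,m}`. -/
def SchubertVariety (m : ℕ) {V : Type*} [AddCommGroup V] [Module ℂ V]
    (lam : Fin m → ℕ) (F : Fin (2 * m + 1) → Submodule ℂ V) :
    Set (Submodule ℂ V) :=
  {H | finrank ℂ H = m ∧ ∀ i : Fin m,
    (i : ℕ) + 1 ≤
      finrank ℂ ↥(H ⊓ F ⟨m + ((i : ℕ) + 1) - lam i, by have := i.isLt; omega⟩)}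

section Ann
variable {V : Type*} [AddCommGroup V] [Module ℂ V] [FiniteDimensional ℂ V]
  (B : LinearMap.BilinForm ℂ V)

lemma mem_ann_iff {W : Submodule ℂ V} {v : V} :
    v ∈ ann B W ↔ ∀ w ∈ W, B v w = 0 := by
  simp [ann, Submodule.mem_comap, Submodule.mem_dualAnnihilator]

lemma ann_antitone {W W' : Submodule ℂ V} (h : W ≤ W') : ann B W' ≤ ann B W := by
  intro v hv
  rw [mem_ann_iff] at hv ⊢
  exact fun w hw => hv w (h hw)

lemma finrank_ann_add (hB : B.Nondegenerate) (W : Submodule ℂ V) :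
    finrank ℂ (ann B W) + finrank ℂ W = finrank ℂ V := by
  have h2 : finrank ℂ (ann B W) = finrank ℂ W.dualAnnihilator := by
    exact LinearEquiv.finrank_eq ((B.toDual hB).ofSubmodule' W.dualAnnihilator)
  have h3 : finrank ℂ W.dualAnnihilator = finrank ℂ (V ⧸ W) :=
    (Subspace.quotEquivAnnihilator W).finrank_eq.symm
  rw [h2, h3, Submodule.finrank_quotient_add_finrank]

lemma ann_ann (hB : B.Nondegenerate) (halt : B.IsAlt) (W : Submodule ℂ V) :
    ann B (ann B W) = W := by
  have hle : W ≤ ann B (ann B W) := by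
    intro w hw
    rw [mem_ann_iff]
    intro v hv
    rw [mem_ann_iff] at hv
    rw [← LinearMap.IsAlt.neg halt v w, hv w hw, neg_zero]
  have h1 := finrank_ann_add B hB W
  have h2 := finrank_ann_add B hB (ann B W)
  exact (Submodule.eq_of_le_of_finrank_le hle (by omega)).symm

lemma ann_sup (W W' : Submodule ℂ V) :
    ann B (W ⊔ W') = ann B W ⊓ ann B W' := by
  unfold ann
  rw [Submodule.dualAnnihilator_sup_eq, Submodule.comap_inf]

lemma finrank_ann_inf_ann (hB : B.Nondegenerate) (H W : Submodule ℂ V) :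
    finrank ℂ (ann B H ⊓ ann B W : Submodule ℂ V) + finrank ℂ H + finrank ℂ W
      = finrank ℂ V + finrank ℂ (H ⊓ W : Submodule ℂ V) := by
  rw [← ann_sup]
  have h1 := finrank_ann_add B hB (H ⊔ W)
  have h2 := Submodule.finrank_sup_add_finrank_inf_eq H W
  omega

end Ann

/-- Key combinatorial lemma relating the Schubert conditions of a partition and
its conjugate via the rank function `d`. -/
lemma comb (m : ℕ) (lam : Fin m → ℕ) (hanti : Antitone lam) (hle : ∀ i, lam i ≤ m)
    (d : ℕ → ℕ) (hmono : Monotone d)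
    (hstep : ∀ a b : ℕ, a ≤ b → d b ≤ d a + (b - a)) (hd : d (2 * m) = m) :
    (∀ i : Fin m, lam i ≤ d (m + lam i - ((i : ℕ) + 1))) ↔
    (∀ j : Fin m, (j : ℕ) + 1 ≤ d (m + ((j : ℕ) + 1) - conjugatePartition m lam j)) := by
  constructor
  · intro hC j
    set c := conjugatePartition m lam j with hc
    have hcm : c ≤ m := by
      have := Finset.card_filter_le Finset.univ (fun i : Fin m => (j : ℕ) + 1 ≤ lam i)
      exact this.trans (by simp)
    rcases Nat.eq_zero_or_pos c with h0 | hpos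
    · rw [h0]
      simp only [Nat.sub_zero]
      have := hstep (m + ((j : ℕ) + 1)) (2 * m) (by omega)
      have hjm := j.isLt
      omega
    · have hcm' : c - 1 < m := by omega
      set i : Fin m := ⟨c - 1, hcm'⟩ with hi
      have hji : (j : ℕ) + 1 ≤ lam i := by
        by_contra hcon
        push_neg at hcon
        have hsub : (Finset.univ.filter fun k : Fin m => (j : ℕ) + 1 ≤ lam k).card
            ≤ (Finset.range (c - 1)).card := by
          refine Finset.card_le_card_of_injOn (fun k : Fin m => (k : ℕ)) ?_ ?_
          · intro k hk
            simp only [Finset.mem_coe, Finset.mem_filter, Finset.mem_univ, true_and] at hk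
            simp only [Finset.mem_coe, Finset.mem_range]
            by_contra hge
            push_neg at hge
            have : lam k ≤ lam i := hanti (by simpa [hi, Fin.le_def] using hge)
            omega
          · intro a _ b _ hab
            exact Fin.ext hab
        have hcval : (Finset.univ.filter fun k : Fin m => (j : ℕ) + 1 ≤ lam k).card = c := rfl
        rw [Finset.card_range, hcval] at hsub
        omega
      have hCi := hC i
      have hival : (i : ℕ) + 1 = c := by simp [hi]; omega
      rw [hival] at hCi
      have hst := hstep (m + ((j : ℕ) + 1) - c) (m + lam i - c) (by omega)
      have hlam := hle i
      omega
  · intro hA i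
    rcases Nat.eq_zero_or_pos (lam i) with h0 | hpos
    · simp [h0]
    · have hjm : lam i - 1 < m := by have := hle i; omega
      set j : Fin m := ⟨lam i - 1, hjm⟩ with hj
      have hcard : (i : ℕ) + 1 ≤ conjugatePartition m lam j := by
        unfold conjugatePartition
        have : (Finset.range ((i : ℕ) + 1)).card
            ≤ (Finset.univ.filter fun k : Fin m => (j : ℕ) + 1 ≤ lam k).card := by
          refine Finset.card_le_card_of_injOn
            (fun t => (⟨min t (i : ℕ), lt_of_le_of_lt (min_le_right _ _) i.isLt⟩ : Fin m)) ?_ ?_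
          · intro t ht
            simp only [Finset.mem_coe, Finset.mem_range] at ht
            simp only [Finset.mem_coe, Finset.mem_filter, Finset.mem_univ, true_and]
            have hmin : min t (i : ℕ) ≤ (i : ℕ) := min_le_right _ _
            have h1 : lam i ≤ lam ⟨min t (i : ℕ), lt_of_le_of_lt (min_le_right _ _) i.isLt⟩ :=
              hanti (by simpa [Fin.le_def] using hmin)
            have h2 : (j : ℕ) = lam i - 1 := rfl
            omega
          · intro a ha b hb hab
            simp only [Finset.coe_range, Set.mem_Iio] at ha hb
            have : min a (i : ℕ) = min b (i : ℕ) := congrArg Fin.val hab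
            omega
        simpa using this
      have hAj := hA j
      have hjval : (j : ℕ) + 1 = lam i := by simp [hj]; omega
      rw [hjval] at hAj
      have hcm : conjugatePartition m lam j ≤ m := by
        have := Finset.card_filter_le Finset.univ (fun k : Fin m => (j : ℕ) + 1 ≤ lam k)
        simpa [conjugatePartition] using this
      have hmono' := hmono (show m + lam i - conjugatePartition m lam j
          ≤ m + lam i - ((i : ℕ) + 1) by omega)
      omega

section Main
variable {V : Type*} [AddCommGroup V] [Module ℂ V] [FiniteDimensional ℂ V]

lemma finrank_inf_step {H W W' : Submodule ℂ V} (hWW : W ≤ W') :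
    finrank ℂ (H ⊓ W' : Submodule ℂ V) + finrank ℂ W
      ≤ finrank ℂ (H ⊓ W : Submodule ℂ V) + finrank ℂ W' := by
  have h1 := Submodule.finrank_sup_add_finrank_inf_eq (H ⊓ W') W
  have h2 : (H ⊓ W') ⊓ W = H ⊓ W := by
    rw [inf_assoc, inf_eq_right.mpr hWW]
  have h3 : (H ⊓ W') ⊔ W ≤ W' := sup_le inf_le_right hWW
  have h4 := Submodule.finrank_mono h3
  rw [h2] at h1
  omega

/-- The rank function `n ↦ dim (H ∩ F_n)` (truncated at `2m`). -/
noncomputable def rkf (m : ℕ) (H : Submodule ℂ V)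
    (F : Fin (2 * m + 1) → Submodule ℂ V) : ℕ → ℕ :=
  fun n => finrank ℂ (H ⊓ F ⟨min n (2 * m), by omega⟩ : Submodule ℂ V)

lemma rkf_eq (m : ℕ) (H : Submodule ℂ V) (F : Fin (2 * m + 1) → Submodule ℂ V)
    (n : ℕ) (h : n < 2 * m + 1) :
    rkf m H F n = finrank ℂ (H ⊓ F ⟨n, h⟩ : Submodule ℂ V) := by
  unfold rkf
  have : (⟨min n (2 * m), by omega⟩ : Fin (2 * m + 1)) = ⟨n, h⟩ :=
    Fin.ext (min_eq_left (by omega))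
  rw [this]

set_option maxHeartbeats 1000000 in
lemma ann_mem_schubert (m : ℕ) (hdim : finrank ℂ V = 2 * m)
    (B : LinearMap.BilinForm ℂ V) (halt : B.IsAlt) (hB : B.Nondegenerate)
    (lam : Fin m → ℕ) (hanti : Antitone lam) (hle : ∀ i, lam i ≤ m)
    (hsym : conjugatePartition m lam = lam)
    (F : Fin (2 * m + 1) → Submodule ℂ V) (hF : IsFullFlag m F)
    (hiso : annFlag m B F = F)
    (H : Submodule ℂ V) (hH : H ∈ SchubertVariety m lam F) :
    ann B H ∈ SchubertVariety m lam F := by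
  obtain ⟨hHm, hHcond⟩ := hH
  obtain ⟨hF0, hFtop, hFmono, hFrank⟩ := hF
  have hmono : Monotone (rkf m H F) := by
    intro a b hab
    unfold rkf
    apply Submodule.finrank_mono
    apply inf_le_inf_left
    apply hFmono.monotone
    simp only [Fin.le_def]
    omega
  have hstep1 : ∀ n, rkf m H F (n + 1) ≤ rkf m H F n + 1 := by
    intro n
    by_cases h : n + 1 ≤ 2 * m
    · rw [rkf_eq m H F (n + 1) (by omega), rkf_eq m H F n (by omega)]
      have hle' : F ⟨n, by omega⟩ ≤ F ⟨n + 1, by omega⟩ := by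
        apply hFmono.monotone
        simp [Fin.le_def]
      have hst := finrank_inf_step (H := H) hle'
      rw [hFrank ⟨n, by omega⟩, hFrank ⟨n + 1, by omega⟩] at hst
      have e1 : ((⟨n, by omega⟩ : Fin (2 * m + 1)) : ℕ) = n := rfl
      have e2 : ((⟨n + 1, by omega⟩ : Fin (2 * m + 1)) : ℕ) = n + 1 := rfl
      rw [e1, e2] at hst
      omega
    · unfold rkf
      have : (⟨min (n + 1) (2 * m), by omega⟩ : Fin (2 * m + 1))
          = ⟨min n (2 * m), by omega⟩ :=
        Fin.ext (show min (n + 1) (2 * m) = min n (2 * m) by omega)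
      rw [this]
      exact Nat.le_succ _
  have hstep : ∀ a b : ℕ, a ≤ b → rkf m H F b ≤ rkf m H F a + (b - a) := by
    intro a b hab
    induction b with
    | zero => simpa [Nat.le_zero.mp hab]
    | succ n ih =>
      rcases Nat.lt_or_ge a (n + 1) with h | h
      · have h1 := ih (by omega)
        have h2 := hstep1 n
        omega
      · have : a = n + 1 := by omega
        simp [this]
  have hd2m : rkf m H F (2 * m) = m := by
    rw [rkf_eq m H F (2 * m) (by omega)]
    have : (⟨2 * m, by omega⟩ : Fin (2 * m + 1)) = Fin.last (2 * m) := rfl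
    rw [this, hFtop, inf_top_eq, hHm]
  have hA : ∀ j : Fin m,
      (j : ℕ) + 1 ≤ rkf m H F (m + ((j : ℕ) + 1) - conjugatePartition m lam j) := by
    intro j
    rw [hsym]
    have hj := j.isLt
    have hlej := hle j
    rw [rkf_eq m H F (m + ((j : ℕ) + 1) - lam j) (by omega)]
    exact hHcond j
  have hC := (comb m lam hanti hle (rkf m H F) hmono hstep hd2m).mpr hA
  constructor
  · have := finrank_ann_add B hB H
    rw [hHm, hdim] at this
    omega
  · intro i
    have hi := i.isLt
    have hlei := hle i
    have hCi := hC i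
    set a : ℕ := m + lam i - ((i : ℕ) + 1) with ha
    have hav : a < 2 * m + 1 := by omega
    set Fa : Fin (2 * m + 1) := ⟨a, hav⟩ with hFa
    have hflag : F ⟨m + ((i : ℕ) + 1) - lam i, by omega⟩ = ann B (F Fa) := by
      have h1 := congrFun hiso ⟨m + ((i : ℕ) + 1) - lam i, by omega⟩
      rw [← h1]
      unfold annFlag
      have hrev : (⟨m + ((i : ℕ) + 1) - lam i, by omega⟩ : Fin (2 * m + 1)).rev
          = Fa := by
        apply Fin.ext
        rw [Fin.val_rev]
        show 2 * m + 1 - (m + ((i : ℕ) + 1) - lam i + 1) = a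
        omega
      rw [hrev]
    rw [hflag]
    have hkey := finrank_ann_inf_ann B hB H (F Fa)
    have hfr : finrank ℂ (F Fa : Submodule ℂ V) = a := hFrank Fa
    have hdval : rkf m H F a = finrank ℂ (H ⊓ F Fa : Submodule ℂ V) := rkf_eq m H F a hav
    omega

end Main

theorem stmt5 (m : ℕ) (hm : 1 ≤ m) (V : Type*) [AddCommGroup V] [Module ℂ V]
    [FiniteDimensional ℂ V] (hdim : finrank ℂ V = 2 * m)
    (B : LinearMap.BilinForm ℂ V) (halt : B.IsAlt) (hB : B.Nondegenerate)
    (s : ℕ) (lam : Fin s → Fin m → ℕ)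
    (hanti : ∀ k, Antitone (lam k)) (hle : ∀ k i, lam k i ≤ m)
    (hsym : ∀ k, conjugatePartition m (lam k) = lam k)
    (F : Fin s → Fin (2 * m + 1) → Submodule ℂ V)
    (hF : ∀ k, IsFullFlag m (F k)) (hiso : ∀ k, annFlag m B (F k) = F k) :
    ann B '' (⋂ k, SchubertVariety m (lam k) (F k))
        = (⋂ k, SchubertVariety m (lam k) (F k)) ∧
    Set.BijOn (ann B) (⋂ k, SchubertVariety m (lam k) (F k))
        (⋂ k, SchubertVariety m (lam k) (F k)) ∧
    ∀ H ∈ ⋂ k, SchubertVariety m (lam k) (F k), ann B (ann B H) = H := by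
  have hinv : ∀ H : Submodule ℂ V, ann B (ann B H) = H := fun H => ann_ann B hB halt H
  have hmem : ∀ H ∈ ⋂ k, SchubertVariety m (lam k) (F k),
      ann B H ∈ ⋂ k, SchubertVariety m (lam k) (F k) := by
    intro H hH
    rw [Set.mem_iInter] at hH ⊢
    intro k
    exact ann_mem_schubert m hdim B halt hB (lam k) (hanti k) (hle k) (hsym k)
      (F k) (hF k) (hiso k) H (hH k)
  refine ⟨?_, ⟨fun H hH => hmem H hH, fun H hH H' hH' e => by
      rw [← hinv H, e, hinv H'],
    fun H hH => ⟨ann B H, hmem H hH, hinv H⟩⟩, fun H _ => hinv H⟩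
  apply Set.Subset.antisymm
  · rintro _ ⟨H, hH, rfl⟩
    exact hmem H hH
  · intro H hH
    exact ⟨ann B H, hmem H hH, hinv H⟩
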